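/- Under the hypotheses of the previous lemma (S not closed at infinity, witness point (0,u)), if m := m₁ + |J(u)| < n + 1, then the m × n Jacobian matrix A(u) whose rows are the gradients (in x₁,…,xₙ) of ĥ₁,…,ĥ_{m₁} and ĝⱼ (j ∈ J(u)) evaluated at u has rank strictly less than m. -/

import Mathlib

open MvPolynomial

lemma hasStrictFDerivAt_mvpoly_eval {N : ℕ} (p : MvPolynomial (Fin N) ℝ) (a : Fin N → ℝ) :
    HasStrictFDerivAt (fun x : Fin N → ℝ => eval x p)
      (∑ k : Fin N, eval a (pderiv k p) • (ContinuousLinearMap.proj k : (Fin N → ℝ) →L[ℝ] ℝ)) a := by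
  induction p using MvPolynomial.induction_on with
  | C r =>
      simp only [pderiv_C, map_zero, zero_smul, Finset.sum_const_zero, eval_C]
      exact hasStrictFDerivAt_const _ _
  | add p q hp hq =>
      have e : (fun x : Fin N → ℝ => eval x (p + q)) = fun x => eval x p + eval x q := by
        funext x; simp
      rw [e]
      refine (hp.add hq).congr_fderiv ?_
      · symm
        rw [← Finset.sum_add_distrib]
        congr 1; funext k; rw [map_add, map_add, add_smul]
  | mul_X p i hp =>
      have key := hp.mul ((ContinuousLinearMap.proj i (R := ℝ) (φ := fun _ : Fin N => ℝ)).hasStrictFDerivAt)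
      have e : (fun x : Fin N → ℝ => eval x (p * X i)) =
          (fun x => eval x p) * ⇑(ContinuousLinearMap.proj i (R := ℝ) (φ := fun _ : Fin N => ℝ)) := by
        funext x; simp
      rw [e]
      refine key.congr_fderiv ?_
      · symm
        ext v
        simp only [ContinuousLinearMap.sum_apply, ContinuousLinearMap.smul_apply,
          ContinuousLinearMap.proj_apply, ContinuousLinearMap.add_apply, smul_eq_mul,
          pderiv_mul, map_add, map_mul, pderiv_X, eval_X]
        rw [Finset.sum_congr rfl (fun k _ => by rw [add_mul]), Finset.sum_add_distrib, add_comm]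
        congr 1
        · rw [Finset.sum_eq_single i]
          · simp
          · intro k _ hk
            rw [Pi.single_apply]
            simp [if_neg (Ne.symm hk)]
          · simp
        · rw [Finset.mul_sum]
          exact Finset.sum_congr rfl fun k _ => by ring

lemma constCoeff_finSuccEquiv_pderiv_succ {n : ℕ} (k : Fin n) (q : MvPolynomial (Fin (n+1)) ℝ) :
    (finSuccEquiv ℝ n (pderiv k.succ q)).coeff 0 = pderiv k ((finSuccEquiv ℝ n q).coeff 0) := by
  induction q using MvPolynomial.induction_on with
  | C r =>
      simp [pderiv_C, finSuccEquiv_apply]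
  | add p q hp hq =>
      simp only [map_add, Polynomial.coeff_add, hp, hq]
  | mul_X p i hp =>
      rw [pderiv_mul, map_add, map_mul, map_mul, Polynomial.coeff_add,
        Polynomial.mul_coeff_zero, Polynomial.mul_coeff_zero, hp, map_mul,
        Polynomial.mul_coeff_zero, pderiv_mul]
      refine Fin.cases ?_ (fun j => ?_) i
      · rw [pderiv_X_of_ne (Fin.succ_ne_zero k).symm, finSuccEquiv_X_zero]
        simp
      · rw [finSuccEquiv_X_succ]
        rcases eq_or_ne j k with rfl | hjk
        · simp [pderiv_X_self]
        · simp [pderiv_X_of_ne hjk, pderiv_X_of_ne (fun hh => hjk (Fin.succ_injective n hh))]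

lemma homogeneousComponent_eq_constCoeff {n d : ℕ} (q : MvPolynomial (Fin (n+1)) ℝ)
    (p : MvPolynomial (Fin n) ℝ) (hq : q.IsHomogeneous d)
    (hpq : ∀ x : Fin n → ℝ, eval (Fin.cons 1 x) q = eval x p) :
    homogeneousComponent d p = (finSuccEquiv ℝ n q).coeff 0 := by
  have hdeg : ∀ (i : ℕ) (m : Fin n →₀ ℕ), (m.cons i).degree = i + m.degree := by
    intro i m
    show ((m.cons i).sum fun _ e => e) = i + (m.sum fun _ e => e)
    exact Finsupp.sum_cons n m i
  have hp : p = ∑ i ∈ Finset.range ((finSuccEquiv ℝ n q).natDegree + 1),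
      (finSuccEquiv ℝ n q).coeff i := by
    apply MvPolynomial.funext
    intro x
    rw [← hpq x, eval_eq_eval_mv_eval',
      Polynomial.eval_eq_sum_range' (n := (finSuccEquiv ℝ n q).natDegree + 1)
        (Polynomial.natDegree_map_le.trans_lt (Nat.lt_succ_self _)), map_sum]
    exact Finset.sum_congr rfl fun i _ => by rw [Polynomial.coeff_map, one_pow, mul_one]
  apply MvPolynomial.ext
  intro m
  rw [coeff_homogeneousComponent, finSuccEquiv_coeff_coeff]
  by_cases hm : m.degree = d
  · rw [if_pos hm, hp, coeff_sum, Finset.sum_eq_single 0]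
    · rw [finSuccEquiv_coeff_coeff]
    · intro i _ hi
      rw [finSuccEquiv_coeff_coeff]
      apply hq.coeff_eq_zero
      rw [hdeg, hm]
      omega
    · intro h0
      exact absurd (Finset.mem_range.2 (Nat.succ_pos _)) h0
  · rw [if_neg hm]
    symm
    apply hq.coeff_eq_zero
    rw [hdeg]
    simpa using hm

lemma eval_pderiv_key {n d : ℕ} (k : Fin n) (q : MvPolynomial (Fin (n+1)) ℝ)
    (p : MvPolynomial (Fin n) ℝ) (hq : q.IsHomogeneous d)
    (hpq : ∀ x : Fin n → ℝ, eval (Fin.cons 1 x) q = eval x p) (u : Fin n → ℝ) :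
    eval (Fin.cons 0 u) (pderiv k.succ q) = eval u (pderiv k (homogeneousComponent d p)) := by
  rw [eval_eq_eval_mv_eval', homogeneousComponent_eq_constCoeff q p hq hpq,
    ← constCoeff_finSuccEquiv_pderiv_succ, ← Polynomial.coeff_map,
    Polynomial.coeff_zero_eq_eval_zero]

/-- under the hypotheses of the separation lemma, if
`m = m₁ + |J(u)| < n + 1`, then the Jacobian matrix `A(u)` whose rows are the
gradients of the top-degree parts `ĥᵢ` and `ĝⱼ` (`j ∈ J(u)`) at `u` has rank
strictly less than `m₁ + |J(u)|`. -/
theorem jacobian_rank_deficient_of_not_closed_at_infinity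
    (n m₁ m₂ : ℕ)
    (h : Fin m₁ → MvPolynomial (Fin n) ℝ) (g : Fin m₂ → MvPolynomial (Fin n) ℝ)
    (Hh : Fin m₁ → MvPolynomial (Fin (n + 1)) ℝ)
    (Hg : Fin m₂ → MvPolynomial (Fin (n + 1)) ℝ)
    (hHh : ∀ i, (Hh i).IsHomogeneous (h i).totalDegree)
    (hHh1 : ∀ i, ∀ x : Fin n → ℝ, eval (Fin.cons 1 x) (Hh i) = eval x (h i))
    (hHg : ∀ j, (Hg j).IsHomogeneous (g j).totalDegree)
    (hHg1 : ∀ j, ∀ x : Fin n → ℝ, eval (Fin.cons 1 x) (Hg j) = eval x (g j))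
    (Stilde S0 : Set (Fin (n + 1) → ℝ))
    (hStilde : Stilde = {xt | (∀ i, eval xt (Hh i) = 0) ∧
      (∀ j, 0 ≤ eval xt (Hg j)) ∧ 0 ≤ xt 0})
    (hS0 : S0 = {xt | (∀ i, eval xt (Hh i) = 0) ∧
      (∀ j, 0 ≤ eval xt (Hg j)) ∧ 0 < xt 0})
    (ut : Fin (n + 1) → ℝ) (hu0 : ut 0 = 0) (hune : ut ≠ 0)
    (huS : ut ∈ Stilde) (hunotcl : ut ∉ closure S0)
    (u : Fin n → ℝ) (hu : u = fun i : Fin n => ut i.succ)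
    (hcard : m₁ + Nat.card {j : Fin m₂ // eval ut (Hg j) = 0} < n + 1) :
    Matrix.rank (Matrix.of
        (Sum.elim
          (fun (i : Fin m₁) (k : Fin n) =>
            eval u (pderiv k (homogeneousComponent (h i).totalDegree (h i))))
          (fun (j : {j : Fin m₂ // eval ut (Hg j) = 0}) (k : Fin n) =>
            eval u (pderiv k (homogeneousComponent (g j.1).totalDegree (g j.1)))))) <
      m₁ + Nat.card {j : Fin m₂ // eval ut (Hg j) = 0} := by
  classical
  by_contra hM
  push_neg at hM
  rw [hStilde] at huS
  obtain ⟨huh, hug, -⟩ := huS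
  set J := {j : Fin m₂ // eval ut (Hg j) = 0} with hJ
  set M : Matrix (Fin m₁ ⊕ J) (Fin n) ℝ := Matrix.of
        (Sum.elim
          (fun (i : Fin m₁) (k : Fin n) =>
            eval u (pderiv k (homogeneousComponent (h i).totalDegree (h i))))
          (fun (j : J) (k : Fin n) =>
            eval u (pderiv k (homogeneousComponent (g j.1).totalDegree (g j.1))))) with hMdef
  have hcardJ : Nat.card J = Fintype.card J := Nat.card_eq_fintype_card
  -- the matrix has full rank
  have hr : Module.finrank ℝ (LinearMap.range M.mulVecLin) = m₁ + Nat.card J := by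
    have h1 : M.rank ≤ m₁ + Nat.card J := by
      refine (Matrix.rank_le_card_height M).trans ?_
      rw [Fintype.card_sum, Fintype.card_fin, hcardJ]
    exact le_antisymm h1 hM
  have hrange : LinearMap.range M.mulVecLin = ⊤ := by
    apply Submodule.eq_top_of_finrank_eq
    rw [hr, Module.finrank_pi, Fintype.card_sum, Fintype.card_fin, hcardJ]
  have hsurjM : Function.Surjective M.mulVecLin := LinearMap.range_eq_top.mp hrange
  -- the family of polynomials
  set P : (Fin m₁ ⊕ J) → MvPolynomial (Fin (n + 1)) ℝ :=
    Sum.elim Hh (fun j => Hg j.1) with hP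
  have hut : ut = Fin.cons 0 u := by
    funext x
    refine Fin.cases ?_ (fun k => ?_) x
    · rw [Fin.cons_zero, hu0]
    · rw [Fin.cons_succ, hu]
  have hkey : ∀ (i : Fin m₁ ⊕ J) (k : Fin n), eval ut (pderiv k.succ (P i)) = M i k := by
    rintro (i | ⟨j, hj⟩) k
    · show eval ut (pderiv k.succ (Hh i)) =
        eval u (pderiv k (homogeneousComponent (h i).totalDegree (h i)))
      rw [hut]
      exact eval_pderiv_key k (Hh i) (h i) (hHh i) (hHh1 i) u
    · show eval ut (pderiv k.succ (Hg j)) =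
        eval u (pderiv k (homogeneousComponent (g j).totalDegree (g j)))
      rw [hut]
      exact eval_pderiv_key k (Hg j) (g j) (hHg j) (hHg1 j) u
  -- the map G and its strict derivative D
  set G : (Fin (n + 1) → ℝ) → ℝ × ((Fin m₁ ⊕ J) → ℝ) :=
    fun xt => (xt 0, fun i => eval xt (P i)) with hGdef
  set D : (Fin (n + 1) → ℝ) →L[ℝ] ℝ × ((Fin m₁ ⊕ J) → ℝ) :=
    (ContinuousLinearMap.proj 0).prod
      (ContinuousLinearMap.pi fun i => ∑ k : Fin (n + 1),
        eval ut (pderiv k (P i)) • (ContinuousLinearMap.proj k : (Fin (n+1) → ℝ) →L[ℝ] ℝ))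
    with hDdef
  have hG : HasStrictFDerivAt G D ut := by
    refine HasStrictFDerivAt.prodMk ?_ ?_
    · exact (ContinuousLinearMap.proj (R := ℝ) (φ := fun _ : Fin (n+1) => ℝ) 0).hasStrictFDerivAt
    · refine hasStrictFDerivAt_pi'.mpr fun i => ?_
      rw [ContinuousLinearMap.proj_pi]
      exact hasStrictFDerivAt_mvpoly_eval (P i) ut
  have hDsurj : LinearMap.range (D : (Fin (n + 1) → ℝ) →ₗ[ℝ] ℝ × ((Fin m₁ ⊕ J) → ℝ)) = ⊤ := by
    rw [LinearMap.range_eq_top]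
    rintro ⟨t, w⟩
    obtain ⟨y, hy⟩ := hsurjM (fun i => w i - t * eval ut (pderiv 0 (P i)))
    refine ⟨(Fin.cons t y : Fin (n+1) → ℝ), ?_⟩
    have hDv : D (Fin.cons t y : Fin (n+1) → ℝ) = (t, fun i => ∑ k : Fin (n + 1),
        eval ut (pderiv k (P i)) * (Fin.cons t y : Fin (n+1) → ℝ) k) := by
      rw [hDdef]
      refine Prod.ext ?_ (funext fun i => ?_)
      · simp
      · simp [ContinuousLinearMap.pi_apply, ContinuousLinearMap.sum_apply]
    rw [ContinuousLinearMap.coe_coe, hDv]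
    refine Prod.ext rfl (funext fun i => ?_)
    have hyi := congrFun hy i
    simp only [Matrix.mulVecLin_apply, Matrix.mulVec, dotProduct] at hyi
    show (∑ k : Fin (n + 1), eval ut (pderiv k (P i)) * (Fin.cons t y : Fin (n+1) → ℝ) k) = w i
    rw [Fin.sum_univ_succ, Fin.cons_zero]
    have : ∀ k : Fin n, eval ut (pderiv k.succ (P i)) * (Fin.cons t y : Fin (n+1) → ℝ) k.succ = M i k * y k := by
      intro k
      rw [Fin.cons_succ, hkey]
    rw [Finset.sum_congr rfl (fun k _ => this k), hyi]
    ring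
  have hmap : Filter.map G (nhds ut) = nhds (G ut) := hG.map_nhds_eq_of_surj hDsurj
  have hGut : G ut = (0, 0) := by
    refine Prod.ext hu0 (funext fun i => ?_)
    rcases i with i | j
    · exact huh i
    · exact j.2
  -- derive the contradiction: ut would be in the closure of S0
  apply hunotcl
  rw [mem_closure_iff_nhds]
  intro U hU
  have hpos : ∀ᶠ xt in nhds ut, ∀ j : Fin m₂, eval ut (Hg j) ≠ 0 → 0 < eval xt (Hg j) := by
    rw [Filter.eventually_all]
    intro j
    by_cases hj : eval ut (Hg j) = 0
    · filter_upwards with xt hxt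
      exact absurd hj hxt
    · have hc : ContinuousAt (fun xt => eval xt (Hg j)) ut :=
        (hasStrictFDerivAt_mvpoly_eval (Hg j) ut).continuousAt
      have hpos0 : 0 < eval ut (Hg j) := lt_of_le_of_ne (hug j) (Ne.symm hj)
      filter_upwards [hc.preimage_mem_nhds (Ioi_mem_nhds hpos0)] with xt hxt _
      exact hxt
  have hW : U ∩ {xt | ∀ j : Fin m₂, eval ut (Hg j) ≠ 0 → 0 < eval xt (Hg j)} ∈ nhds ut :=
    Filter.inter_mem hU hpos
  have himg : G '' (U ∩ {xt | ∀ j : Fin m₂, eval ut (Hg j) ≠ 0 → 0 < eval xt (Hg j)})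
      ∈ nhds (G ut) := hmap ▸ Filter.image_mem_map hW
  rw [hGut] at himg
  have hline : ContinuousAt (fun t : ℝ => ((t, 0) : ℝ × ((Fin m₁ ⊕ J) → ℝ))) 0 :=
    (continuous_id.prodMk continuous_const).continuousAt
  have hpre : (fun t : ℝ => ((t, 0) : ℝ × ((Fin m₁ ⊕ J) → ℝ))) ⁻¹'
      (G '' (U ∩ {xt | ∀ j : Fin m₂, eval ut (Hg j) ≠ 0 → 0 < eval xt (Hg j)})) ∈ nhds (0 : ℝ) :=
    hline.preimage_mem_nhds (by simpa using himg)
  obtain ⟨ε, hε, hball⟩ := Metric.mem_nhds_iff.mp hpre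
  have ht : (ε / 2) ∈ Metric.ball (0 : ℝ) ε := by
    simp only [Metric.mem_ball, Real.dist_eq, sub_zero]
    rw [abs_of_pos (by linarith)]
    linarith
  obtain ⟨xt, hxtW, hGxt⟩ := hball ht
  have h1 : xt 0 = ε / 2 := congrArg Prod.fst hGxt
  have h2 : (fun i => eval xt (P i)) = (0 : (Fin m₁ ⊕ J) → ℝ) := congrArg Prod.snd hGxt
  refine ⟨xt, hxtW.1, ?_⟩
  rw [hS0]
  refine ⟨fun i => congrFun h2 (Sum.inl i), fun j => ?_, by rw [h1]; linarith⟩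
  by_cases hj : eval ut (Hg j) = 0
  · exact le_of_eq (congrFun h2 (Sum.inr ⟨j, hj⟩)).symm
  · exact (hxtW.2 j hj).le
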